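/- arXiv:1301.2527 — 3 statements merged into one kernel-verified Lean document; each statement's English description precedes it below -/
import Mathlib

section
/- For every real number a ≠ 0 and every λ > 0, the Laplace transform of the first-passage density f_a satisfies ∫₀^∞ e^{−λt} · (|a| / √(2πt³)) · exp(−a²/(2t)) dt = exp(−|a| · √(2λ)). -/
open MeasureTheory Real

set_option maxHeartbeats 1000000 in
/-- Laplace transform of the first-passage density `f_a`:
`∫₀^∞ e^{−λt} (|a| / √(2πt³)) exp(−a²/(2t)) dt = exp(−|a|√(2λ))` for `a ≠ 0`, `λ > 0`. -/
theorem firstPassageDensity_laplaceTransform (a : ℝ) (ha : a ≠ 0) (l : ℝ) (hl : 0 < l) :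
    ∫ t in Set.Ioi (0 : ℝ),
      Real.exp (-l * t) * (|a| / Real.sqrt (2 * Real.pi * t ^ 3) * Real.exp (-a ^ 2 / (2 * t)))
      = Real.exp (-|a| * Real.sqrt (2 * l)) := by
  have h2 : (0:ℝ) < Real.sqrt 2 := by positivity
  set c : ℝ := |a| / Real.sqrt 2 with hc
  have hcpos : 0 < c := div_pos (abs_pos.mpr ha) h2
  have hc2 : c ^ 2 = a ^ 2 / 2 := by
    rw [hc, div_pow, sq_abs, Real.sq_sqrt (by norm_num : (0:ℝ) ≤ 2)]
  set sl : ℝ := Real.sqrt l with hsl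
  have hslpos : 0 < sl := Real.sqrt_pos.mpr hl
  have hsl2 : sl ^ 2 = l := Real.sq_sqrt hl.le
  set g : ℝ → ℝ := fun t => sl * Real.sqrt t - c / Real.sqrt t with hgdef
  set g' : ℝ → ℝ := fun t => sl / (2 * Real.sqrt t) + c / (2 * (Real.sqrt t * t)) with hg'def
  -- basic facts about sqrt on Ioi 0
  have hst : ∀ t ∈ Set.Ioi (0:ℝ), 0 < Real.sqrt t := fun t ht => Real.sqrt_pos.mpr ht
  have hst2 : ∀ t ∈ Set.Ioi (0:ℝ), Real.sqrt t ^ 2 = t := fun t ht => Real.sq_sqrt (le_of_lt ht)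
  -- derivative
  have hderiv : ∀ t ∈ Set.Ioi (0:ℝ), HasDerivAt g (g' t) t := by
    intro t ht
    have ht0 : (0:ℝ) < t := ht
    have hstp := hst t ht
    have h1 : HasDerivAt (fun t => Real.sqrt t) (1 / (2 * Real.sqrt t)) t :=
      Real.hasDerivAt_sqrt ht0.ne'
    have h2' : HasDerivAt (fun t => sl * Real.sqrt t) (sl * (1 / (2 * Real.sqrt t))) t :=
      h1.const_mul sl
    have h3 : HasDerivAt (fun t => (Real.sqrt t)⁻¹)
        (-(1 / (2 * Real.sqrt t)) / (Real.sqrt t) ^ 2) t := h1.inv hstp.ne'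
    have h4 : HasDerivAt (fun t => c * (Real.sqrt t)⁻¹)
        (c * (-(1 / (2 * Real.sqrt t)) / (Real.sqrt t) ^ 2)) t := h3.const_mul c
    have h5 := h2'.sub h4
    have h6 : ((fun t => sl * Real.sqrt t) - fun t => c * (Real.sqrt t)⁻¹) = g := by
      funext x
      simp [hgdef, div_eq_mul_inv]
    rw [h6] at h5
    have h7 : g' t = sl * (1 / (2 * Real.sqrt t)) - c * (-(1 / (2 * Real.sqrt t)) / Real.sqrt t ^ 2) := by
      simp only [hg'def]
      rw [hst2 t ht]
      field_simp
      ring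
    rw [h7]
    exact h5
  -- strict monotonicity
  have hmono : StrictMonoOn g (Set.Ioi 0) := by
    intro s hs t ht hst'
    have h1 : Real.sqrt s < Real.sqrt t := Real.sqrt_lt_sqrt (le_of_lt hs) hst'
    have h2' : sl * Real.sqrt s < sl * Real.sqrt t := by
      exact mul_lt_mul_of_pos_left h1 hslpos
    have h3 : c / Real.sqrt t < c / Real.sqrt s :=
      div_lt_div_of_pos_left hcpos (hst s hs) h1
    simp only [hgdef]
    linarith
  -- surjectivity onto ℝ
  have hsurj : ∀ u : ℝ, ∃ t ∈ Set.Ioi (0:ℝ), g t = u := by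
    intro u
    set D : ℝ := Real.sqrt (u ^ 2 + 4 * sl * c) with hD
    have hD0 : 0 ≤ D := Real.sqrt_nonneg _
    have hD2 : D ^ 2 = u ^ 2 + 4 * sl * c := Real.sq_sqrt (by positivity)
    have hDu : -u < D := by nlinarith [mul_pos hslpos hcpos]
    set s : ℝ := (u + D) / (2 * sl) with hs
    have hspos : 0 < s := div_pos (by linarith) (by positivity)
    refine ⟨s ^ 2, Set.mem_Ioi.mpr (by positivity), ?_⟩
    have hss : Real.sqrt (s ^ 2) = s := Real.sqrt_sq hspos.le
    have e1 : s * (2 * sl) = u + D := by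
      rw [hs]; field_simp
    have hkey2 : 4 * sl ^ 2 * (sl * s ^ 2 - c) = 4 * sl ^ 2 * (u * s) := by
      linear_combination (sl * (2 * sl * s + D - u)) * e1 + sl * hD2
    have hkey : sl * s ^ 2 - c = u * s :=
      mul_left_cancel₀ (by positivity) hkey2
    simp only [hgdef, hss]
    field_simp [hspos.ne']
    linear_combination hkey
  have himg : g '' Set.Ioi 0 = Set.univ := by
    apply Set.eq_univ_of_forall
    intro u
    obtain ⟨t, ht, hgt⟩ := hsurj u
    exact ⟨t, ht, hgt⟩
  -- change of variables to Gaussian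
  have hgder : ∀ t ∈ Set.Ioi (0:ℝ), HasDerivWithinAt g (g' t) (Set.Ioi 0) t :=
    fun t ht => (hderiv t ht).hasDerivWithinAt
  have hg'pos : ∀ t ∈ Set.Ioi (0:ℝ), 0 < g' t := by
    intro t ht
    have := hst t ht
    have ht0 : (0:ℝ) < t := ht
    rw [hg'def]
    positivity
  have key : Real.sqrt Real.pi
      = ∫ t in Set.Ioi (0:ℝ), g' t * Real.exp (-(g t) ^ 2) := by
    have h0 : ∫ u : ℝ, Real.exp (-u ^ 2) = Real.sqrt Real.pi := by
      simpa using integral_gaussian 1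
    have h1 := integral_image_eq_integral_abs_deriv_smul measurableSet_Ioi hgder
      hmono.injOn (fun u => Real.exp (-u ^ 2))
    rw [himg, Measure.restrict_univ] at h1
    rw [← h0, h1]
    apply setIntegral_congr_fun measurableSet_Ioi
    intro t ht
    show |g' t| • Real.exp (-(g t) ^ 2) = g' t * Real.exp (-(g t) ^ 2)
    rw [abs_of_pos (hg'pos t ht), smul_eq_mul]
  -- integrability of the full integrand
  have hInt : IntegrableOn (fun t => g' t * Real.exp (-(g t) ^ 2)) (Set.Ioi 0) := by
    have : IntegrableOn (fun u : ℝ => Real.exp (-u ^ 2)) (g '' Set.Ioi 0) := by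
      rw [himg, integrableOn_univ]
      simpa using integrable_exp_neg_mul_sq (by norm_num : (0:ℝ) < 1)
    rw [integrableOn_image_iff_integrableOn_abs_deriv_smul measurableSet_Ioi hgder
      hmono.injOn] at this
    apply this.congr_fun _ measurableSet_Ioi
    intro t ht
    show |g' t| • Real.exp (-(g t) ^ 2) = g' t * Real.exp (-(g t) ^ 2)
    rw [abs_of_pos (hg'pos t ht), smul_eq_mul]
  -- the two pieces
  set A : ℝ → ℝ := fun t => sl / (2 * Real.sqrt t) * Real.exp (-(g t) ^ 2) with hA
  set B : ℝ → ℝ := fun t => c / (2 * (Real.sqrt t * t)) * Real.exp (-(g t) ^ 2) with hB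
  have hmeasA : AEStronglyMeasurable A (volume.restrict (Set.Ioi 0)) := by
    apply Measurable.aestronglyMeasurable
    fun_prop
  have hmeasB : AEStronglyMeasurable B (volume.restrict (Set.Ioi 0)) := by
    apply Measurable.aestronglyMeasurable
    fun_prop
  have hABsum : ∀ t ∈ Set.Ioi (0:ℝ), g' t * Real.exp (-(g t) ^ 2) = A t + B t := by
    intro t ht
    rw [hA, hB, hg'def]
    ring
  have hIntA : IntegrableOn A (Set.Ioi 0) := by
    apply hInt.mono' hmeasA
    filter_upwards [ae_restrict_mem measurableSet_Ioi] with t ht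
    have h1 : 0 ≤ A t := by
      have := hst t ht
      rw [hA]; positivity
    have h2' : 0 ≤ B t := by
      have := hst t ht
      have ht0 : (0:ℝ) < t := ht
      rw [hB]; positivity
    rw [Real.norm_eq_abs, abs_of_nonneg h1, hABsum t ht]
    linarith
  have hIntB : IntegrableOn B (Set.Ioi 0) := by
    apply hInt.mono' hmeasB
    filter_upwards [ae_restrict_mem measurableSet_Ioi] with t ht
    have h1 : 0 ≤ A t := by
      have := hst t ht
      rw [hA]; positivity
    have h2' : 0 ≤ B t := by
      have := hst t ht
      have ht0 : (0:ℝ) < t := ht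
      rw [hB]; positivity
    rw [Real.norm_eq_abs, abs_of_nonneg h2', hABsum t ht]
    linarith
  have hsplit : (∫ t in Set.Ioi (0:ℝ), A t) + (∫ t in Set.Ioi (0:ℝ), B t)
      = Real.sqrt Real.pi := by
    rw [key, ← integral_add hIntA hIntB]
    apply setIntegral_congr_fun measurableSet_Ioi
    intro t ht
    exact (hABsum t ht).symm
  -- reflection: A-integral = B-integral
  set φ : ℝ → ℝ := fun t => c ^ 2 / (l * t) with hφ
  have hφmem : ∀ t ∈ Set.Ioi (0:ℝ), φ t ∈ Set.Ioi (0:ℝ) := by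
    intro t ht
    have ht0 : (0:ℝ) < t := ht
    simp only [hφ, Set.mem_Ioi]
    positivity
  have hφinv : ∀ t ∈ Set.Ioi (0:ℝ), φ (φ t) = t := by
    intro t ht
    have ht0 : (0:ℝ) < t := ht
    simp only [hφ]
    field_simp
  have hφimg : φ '' Set.Ioi 0 = Set.Ioi 0 := by
    apply Set.Subset.antisymm
    · rintro x ⟨t, ht, rfl⟩
      exact hφmem t ht
    · intro x hx
      exact ⟨φ x, hφmem x hx, hφinv x hx⟩
  have hφinj : Set.InjOn φ (Set.Ioi 0) := by
    intro s hs t ht hφst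
    have := congrArg φ hφst
    rwa [hφinv s hs, hφinv t ht] at this
  have hφder : ∀ t ∈ Set.Ioi (0:ℝ), HasDerivWithinAt φ (-(c ^ 2 / l) / t ^ 2) (Set.Ioi 0) t := by
    intro t ht
    have ht0 : (0:ℝ) < t := ht
    have h1 : HasDerivAt (fun t : ℝ => c ^ 2 / l * t⁻¹) (c ^ 2 / l * (-(t ^ 2)⁻¹)) t := by
      have := (hasDerivAt_inv ht0.ne').const_mul (c ^ 2 / l)
      simpa using this
    have heq : φ = fun t : ℝ => c ^ 2 / l * t⁻¹ := by
      funext x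
      simp only [hφ]
      ring
    have h2' : HasDerivAt φ (-(c ^ 2 / l) / t ^ 2) t := by
      rw [heq]
      convert h1 using 1
      ring
    exact h2'.hasDerivWithinAt
  have hgφ : ∀ t ∈ Set.Ioi (0:ℝ), g (φ t) = -g t := by
    intro t ht
    have ht0 : (0:ℝ) < t := ht
    have hstp := hst t ht
    have hstsq := hst2 t ht
    have hsqφ : Real.sqrt (φ t) = c / (sl * Real.sqrt t) := by
      rw [show φ t = (c / (sl * Real.sqrt t)) ^ 2 by
        simp only [hφ]; field_simp; nlinarith [hsl2, hstsq]]
      exact Real.sqrt_sq (by positivity)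
    simp only [hgdef, hsqφ]
    field_simp
    ring
  have hrefl : (∫ t in Set.Ioi (0:ℝ), A t) = ∫ t in Set.Ioi (0:ℝ), B t := by
    conv_lhs => rw [← hφimg,
      integral_image_eq_integral_abs_deriv_smul measurableSet_Ioi hφder hφinj]
    apply setIntegral_congr_fun measurableSet_Ioi
    intro t ht
    have ht0 : (0:ℝ) < t := ht
    have hstp := hst t ht
    have hstsq := hst2 t ht
    have hsqφ : Real.sqrt (φ t) = c / (sl * Real.sqrt t) := by
      rw [show φ t = (c / (sl * Real.sqrt t)) ^ 2 by
        simp only [hφ]; field_simp; nlinarith [hsl2, hstsq]]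
      exact Real.sqrt_sq (by positivity)
    have habs : |(-(c ^ 2 / l) / t ^ 2)| = c ^ 2 / l / t ^ 2 := by
      rw [abs_div, abs_neg, abs_of_nonneg (by positivity : (0:ℝ) ≤ c ^ 2 / l),
        abs_of_nonneg (by positivity : (0:ℝ) ≤ t ^ 2)]
    simp only [smul_eq_mul, hA, hB]
    rw [habs, hsqφ, hgφ t ht, neg_sq]
    have hco : c ^ 2 / l / t ^ 2 * (sl / (2 * (c / (sl * Real.sqrt t)))) = c / (2 * (Real.sqrt t * t)) := by
      rw [← hsl2]
      field_simp
      exact hstsq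
    linear_combination Real.exp (-(g t) ^ 2) * hco
  have hBval : (∫ t in Set.Ioi (0:ℝ), B t) = Real.sqrt Real.pi / 2 := by
    rw [hrefl] at hsplit
    linarith
  -- final computation
  have hfinal : ∀ t ∈ Set.Ioi (0:ℝ),
      Real.exp (-l * t) * (|a| / Real.sqrt (2 * Real.pi * t ^ 3) * Real.exp (-a ^ 2 / (2 * t)))
      = (Real.exp (-|a| * Real.sqrt (2 * l)) * (2 / Real.sqrt Real.pi)) * B t := by
    intro t ht
    have ht0 : (0:ℝ) < t := ht
    have hstp := hst t ht
    have hstsq := hst2 t ht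
    have hπ : (0:ℝ) < Real.sqrt Real.pi := Real.sqrt_pos.mpr Real.pi_pos
    have hsqrt2l : Real.sqrt (2 * l) = Real.sqrt 2 * sl := Real.sqrt_mul (by norm_num) l
    have hden : Real.sqrt (2 * Real.pi * t ^ 3)
        = Real.sqrt 2 * Real.sqrt Real.pi * (t * Real.sqrt t) := by
      rw [show 2 * Real.pi * t ^ 3 = 2 * (Real.pi * (t ^ 3)) by ring,
        Real.sqrt_mul (by norm_num), Real.sqrt_mul Real.pi_pos.le,
        show t ^ 3 = t ^ 2 * t by ring, Real.sqrt_mul (by positivity),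
        Real.sqrt_sq ht0.le]
      ring
    have hexp : -l * t + -a ^ 2 / (2 * t) = -(g t) ^ 2 + -|a| * Real.sqrt (2 * l) := by
      have hcc : 2 * (sl * c) = |a| * Real.sqrt (2 * l) := by
        rw [hsqrt2l, hc]
        field_simp
        linear_combination (-1) * (Real.sq_sqrt (by norm_num : (0:ℝ) ≤ 2))
      have hg2 : (g t) ^ 2 = l * t + c ^ 2 / t - 2 * (sl * c) := by
        simp only [hgdef]
        field_simp
        rw [hstsq, ← hsl2]
        ring
      rw [hg2, hc2, hcc]
      ring
    have hcoef : |a| / Real.sqrt (2 * Real.pi * t ^ 3)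
        = (2 / Real.sqrt Real.pi) * (c / (2 * (Real.sqrt t * t))) := by
      rw [hden, hc]
      field_simp
    rw [show Real.exp (-l * t) * (|a| / Real.sqrt (2 * Real.pi * t ^ 3) * Real.exp (-a ^ 2 / (2 * t)))
        = |a| / Real.sqrt (2 * Real.pi * t ^ 3) * (Real.exp (-l * t) * Real.exp (-a ^ 2 / (2 * t))) by ring,
      ← Real.exp_add, hexp, Real.exp_add, hcoef]
    simp only [hB]
    ring
  calc ∫ t in Set.Ioi (0:ℝ),
      Real.exp (-l * t) * (|a| / Real.sqrt (2 * Real.pi * t ^ 3) * Real.exp (-a ^ 2 / (2 * t)))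
      = ∫ t in Set.Ioi (0:ℝ),
        (Real.exp (-|a| * Real.sqrt (2 * l)) * (2 / Real.sqrt Real.pi)) * B t :=
        setIntegral_congr_fun measurableSet_Ioi hfinal
    _ = (Real.exp (-|a| * Real.sqrt (2 * l)) * (2 / Real.sqrt Real.pi))
        * ∫ t in Set.Ioi (0:ℝ), B t := integral_const_mul _ _
    _ = Real.exp (-|a| * Real.sqrt (2 * l)) := by
        rw [hBval]
        have hπ : (0:ℝ) < Real.sqrt Real.pi := Real.sqrt_pos.mpr Real.pi_pos
        field_simp
end

section
/- For every r > 0, the function p_r(t) = (1 / (r·√(2πt))) · (1 − exp(−r²/(2t))) is a probability density on (0, ∞): it is nonnegative and ∫₀^∞ (1 / (r·√(2πt))) · (1 − exp(−r²/(2t))) dt = 1. -/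
open MeasureTheory Real Set Filter Topology

noncomputable def UMTD.H (u : ℝ) : ℝ := ∫ x in Set.Ioi u, Real.exp (-x ^ 2 / 2)

namespace UMTD

lemma gauss_integrable : Integrable (fun x : ℝ => Real.exp (-x ^ 2 / 2)) := by
  have : (fun x : ℝ => Real.exp (-x ^ 2 / 2)) = fun x => Real.exp (-(1/2 : ℝ) * x ^ 2) := by
    ext x; ring_nf
  rw [this]
  exact integrable_exp_neg_mul_sq (by norm_num)

lemma gauss_cont : Continuous (fun x : ℝ => Real.exp (-x ^ 2 / 2)) := by
  continuity

lemma H_eq (u : ℝ) : H u = H 0 - ∫ x in (0:ℝ)..u, Real.exp (-x ^ 2 / 2) := by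
  have h1 := intervalIntegral.integral_Iic_add_Ioi (b := u) (μ := volume)
    (gauss_integrable.integrableOn) (gauss_integrable.integrableOn)
  have h2 := intervalIntegral.integral_Iic_add_Ioi (b := (0:ℝ)) (μ := volume)
    (gauss_integrable.integrableOn) (gauss_integrable.integrableOn)
  have h3 := intervalIntegral.integral_Iic_sub_Iic (μ := volume) (a := (0:ℝ)) (b := u)
    (gauss_integrable.integrableOn) (gauss_integrable.integrableOn)
  unfold H
  linarith [h1, h2, h3]

lemma H_hasDerivAt (u : ℝ) : HasDerivAt H (-Real.exp (-u ^ 2 / 2)) u := by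
  have : HasDerivAt (fun v => ∫ x in (0:ℝ)..v, Real.exp (-x ^ 2 / 2))
      (Real.exp (-u ^ 2 / 2)) u :=
    intervalIntegral.integral_hasDerivAt_right
      (gauss_integrable.intervalIntegrable)
      (gauss_cont.stronglyMeasurableAtFilter _ _)
      gauss_cont.continuousAt
  have h := this.const_sub (H 0)
  refine h.congr_of_eventuallyEq ?_ |>.congr_deriv (by ring)
  filter_upwards with v using (H_eq v)

lemma H_tendsto_zero : Tendsto H atTop (𝓝 0) := by
  have h1 : Tendsto (fun u => ∫ x in (0:ℝ)..u, Real.exp (-x ^ 2 / 2)) atTop (𝓝 (H 0)) :=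
    intervalIntegral_tendsto_integral_Ioi 0 gauss_integrable.integrableOn tendsto_id
  have h2 : Tendsto (fun u => H 0 - ∫ x in (0:ℝ)..u, Real.exp (-x ^ 2 / 2)) atTop (𝓝 (H 0 - H 0)) :=
    tendsto_const_nhds.sub h1
  rw [sub_self] at h2
  refine h2.congr fun u => (H_eq u).symm

lemma H_zero : H 0 = Real.sqrt (2 * Real.pi) / 2 := by
  have : (fun x : ℝ => Real.exp (-x ^ 2 / 2)) = fun x => Real.exp (-((1:ℝ)/2) * x ^ 2) := by
    ext x; ring_nf
  unfold H
  rw [this, integral_gaussian_Ioi]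
  rw [show π / (1 / 2 : ℝ) = 2 * π by ring]

end UMTD

namespace UMTD

lemma sqrt_tendsto_atTop : Tendsto Real.sqrt atTop atTop := by
  apply tendsto_atTop_atTop_of_monotone (fun a b h => Real.sqrt_le_sqrt h)
  intro b
  exact ⟨b ^ 2, by rw [Real.sqrt_sq_eq_abs]; exact le_abs_self b⟩

noncomputable def F (r t : ℝ) : ℝ :=
  if t ≤ 0 then 0 else
    2 / (r * Real.sqrt (2 * Real.pi)) * Real.sqrt t * (1 - Real.exp (-r ^ 2 / (2 * t)))
      + 2 / Real.sqrt (2 * Real.pi) * H (r / Real.sqrt t)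

lemma F_pos {r t : ℝ} (ht : 0 < t) :
    F r t = 2 / (r * Real.sqrt (2 * Real.pi)) * Real.sqrt t * (1 - Real.exp (-r ^ 2 / (2 * t)))
      + 2 / Real.sqrt (2 * Real.pi) * H (r / Real.sqrt t) := by
  rw [F, if_neg (not_le.2 ht)]

lemma F_hasDerivAt {r t : ℝ} (hr : 0 < r) (ht : 0 < t) :
    HasDerivAt (F r)
      (1 / (r * Real.sqrt (2 * Real.pi * t)) * (1 - Real.exp (-r ^ 2 / (2 * t)))) t := by
  set s := Real.sqrt t with hs_def
  have hs : 0 < s := Real.sqrt_pos.2 ht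
  have hs2 : s ^ 2 = t := Real.sq_sqrt ht.le
  have h1 : HasDerivAt Real.sqrt (1 / (2 * s)) t := Real.hasDerivAt_sqrt ht.ne'
  have h2 : HasDerivAt (fun u : ℝ => -r ^ 2 / (2 * u)) (r ^ 2 / (2 * t ^ 2)) t := by
    have h := (hasDerivAt_inv ht.ne').const_mul (-r ^ 2 / 2)
    have heq : (fun u : ℝ => -r ^ 2 / 2 * u⁻¹) = fun u : ℝ => -r ^ 2 / (2 * u) := by
      ext u; ring
    rw [heq] at h
    exact h.congr_deriv (by ring)
  have h3 : HasDerivAt (fun u : ℝ => Real.exp (-r ^ 2 / (2 * u)))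
      (Real.exp (-r ^ 2 / (2 * t)) * (r ^ 2 / (2 * t ^ 2))) t := h2.exp
  have h4 : HasDerivAt (fun u : ℝ => 1 - Real.exp (-r ^ 2 / (2 * u)))
      (-(Real.exp (-r ^ 2 / (2 * t)) * (r ^ 2 / (2 * t ^ 2)))) t := h3.const_sub 1
  have h5 := h1.mul h4
  have h6 := h5.const_mul (2 / (r * Real.sqrt (2 * Real.pi)))
  have h7 : HasDerivAt (fun u : ℝ => r / Real.sqrt u) (r * (-(1 / (2 * s)) / s ^ 2)) t := by
    have h := (h1.inv hs.ne').const_mul r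
    have heq : (fun u : ℝ => r * (Real.sqrt⁻¹) u) = fun u : ℝ => r / Real.sqrt u := by
      ext u; rw [Pi.inv_apply, div_eq_mul_inv]
    rw [heq] at h
    exact h
  have h8 : HasDerivAt (fun u : ℝ => H (r / Real.sqrt u))
      (-Real.exp (-(r / s) ^ 2 / 2) * (r * (-(1 / (2 * s)) / s ^ 2))) t := by
    have := H_hasDerivAt (r / s)
    exact this.comp t h7
  have h9 := h8.const_mul (2 / Real.sqrt (2 * Real.pi))
  have htotal := h6.add h9
  have hFeq : F r =ᶠ[nhds t]
      (fun u => 2 / (r * Real.sqrt (2 * Real.pi)) *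
          (Real.sqrt u * (1 - Real.exp (-r ^ 2 / (2 * u))))
        + 2 / Real.sqrt (2 * Real.pi) * H (r / Real.sqrt u)) := by
    filter_upwards [eventually_gt_nhds ht] with u hu
    rw [F_pos hu]; ring
  refine (htotal.congr_of_eventuallyEq hFeq).congr_deriv ?_
  have hE : Real.exp (-(r / s) ^ 2 / 2) = Real.exp (-r ^ 2 / (2 * t)) := by
    congr 1
    rw [← hs2]
    field_simp
  have hsqrt : Real.sqrt (2 * Real.pi * t) = Real.sqrt (2 * Real.pi) * s := by
    rw [hs_def, Real.sqrt_mul (by positivity)]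
  rw [hE, hsqrt, ← hs2]
  simp only [Real.sqrt_sq hs.le]
  have h2π : (0:ℝ) < Real.sqrt (2 * Real.pi) := Real.sqrt_pos.2 (by positivity)
  field_simp
  ring

end UMTD

namespace UMTD

lemma F_tendsto_atTop {r : ℝ} (hr : 0 < r) : Tendsto (F r) atTop (𝓝 1) := by
  have h2π : (0:ℝ) < Real.sqrt (2 * Real.pi) := Real.sqrt_pos.2 (by positivity)
  -- term 1 tends to 0
  have hinv : Tendsto (fun t : ℝ => 1 / Real.sqrt t) atTop (𝓝 0) := by
    simp only [one_div]
    exact tendsto_inv_atTop_zero.comp sqrt_tendsto_atTop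
  have hterm1 : Tendsto (fun t : ℝ =>
      2 / (r * Real.sqrt (2 * Real.pi)) * Real.sqrt t * (1 - Real.exp (-r ^ 2 / (2 * t))))
      atTop (𝓝 0) := by
    have hbound : Tendsto (fun t : ℝ =>
        2 / (r * Real.sqrt (2 * Real.pi)) * (r ^ 2 / 2) * (1 / Real.sqrt t)) atTop (𝓝 0) := by
      have := hinv.const_mul (2 / (r * Real.sqrt (2 * Real.pi)) * (r ^ 2 / 2))
      simpa using this
    apply squeeze_zero' ?_ ?_ hbound
    · filter_upwards [eventually_gt_atTop (0:ℝ)] with t ht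
      have hE : Real.exp (-r ^ 2 / (2 * t)) ≤ 1 := by
        rw [Real.exp_le_one_iff]
        have : (0:ℝ) < 2 * t := by linarith
        apply div_nonpos_of_nonpos_of_nonneg
        · exact neg_nonpos.2 (by positivity)
        · linarith
      have : (0:ℝ) ≤ Real.sqrt t := Real.sqrt_nonneg t
      have ha : (0:ℝ) ≤ 2 / (r * Real.sqrt (2 * Real.pi)) := by positivity
      exact mul_nonneg (mul_nonneg ha this) (by linarith)
    · filter_upwards [eventually_gt_atTop (0:ℝ)] with t ht
      have hs : 0 < Real.sqrt t := Real.sqrt_pos.2 ht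
      have hs2 : Real.sqrt t ^ 2 = t := Real.sq_sqrt ht.le
      have hE : 1 - Real.exp (-r ^ 2 / (2 * t)) ≤ r ^ 2 / (2 * t) := by
        have := Real.add_one_le_exp (-r ^ 2 / (2 * t))
        have hng : -r ^ 2 / (2 * t) = -(r ^ 2 / (2 * t)) := by ring
        rw [hng] at this
        rw [hng]
        linarith
      have hE0 : 0 ≤ 1 - Real.exp (-r ^ 2 / (2 * t)) := by
        rw [sub_nonneg, Real.exp_le_one_iff]
        apply div_nonpos_of_nonpos_of_nonneg
        · exact neg_nonpos.2 (by positivity)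
        · linarith
      have ha : (0:ℝ) ≤ 2 / (r * Real.sqrt (2 * Real.pi)) := by positivity
      have key : Real.sqrt t * (1 - Real.exp (-r ^ 2 / (2 * t)))
          ≤ (r ^ 2 / 2) * (1 / Real.sqrt t) := by
        have h1 : Real.sqrt t * (1 - Real.exp (-r ^ 2 / (2 * t)))
            ≤ Real.sqrt t * (r ^ 2 / (2 * t)) :=
          mul_le_mul_of_nonneg_left hE hs.le
        have h2 : Real.sqrt t * (r ^ 2 / (2 * t)) = (r ^ 2 / 2) * (1 / Real.sqrt t) := by
          field_simp; linear_combination hs2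
        linarith
      calc 2 / (r * Real.sqrt (2 * Real.pi)) * Real.sqrt t * (1 - Real.exp (-r ^ 2 / (2 * t)))
          = 2 / (r * Real.sqrt (2 * Real.pi)) *
              (Real.sqrt t * (1 - Real.exp (-r ^ 2 / (2 * t)))) := by ring
        _ ≤ 2 / (r * Real.sqrt (2 * Real.pi)) * ((r ^ 2 / 2) * (1 / Real.sqrt t)) :=
            mul_le_mul_of_nonneg_left key ha
        _ = 2 / (r * Real.sqrt (2 * Real.pi)) * (r ^ 2 / 2) * (1 / Real.sqrt t) := by ring
  -- term 2 tends to 1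
  have harg : Tendsto (fun t : ℝ => r / Real.sqrt t) atTop (𝓝 0) := by
    simp only [div_eq_mul_inv]
    have := (tendsto_inv_atTop_zero.comp sqrt_tendsto_atTop).const_mul r
    simpa using this
  have hterm2 : Tendsto (fun t : ℝ => 2 / Real.sqrt (2 * Real.pi) * H (r / Real.sqrt t))
      atTop (𝓝 1) := by
    have hHcont : ContinuousAt H 0 := (H_hasDerivAt 0).continuousAt
    have h := (hHcont.tendsto.comp harg).const_mul (2 / Real.sqrt (2 * Real.pi))
    have hval : 2 / Real.sqrt (2 * Real.pi) * H 0 = 1 := by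
      rw [H_zero]; field_simp
    rw [hval] at h
    exact h
  have := hterm1.add hterm2
  rw [zero_add] at this
  apply this.congr'
  filter_upwards [eventually_gt_atTop (0:ℝ)] with t ht
  rw [F_pos ht]

lemma F_contWithinAt {r : ℝ} (hr : 0 < r) : ContinuousWithinAt (F r) (Set.Ici 0) 0 := by
  rw [← continuousWithinAt_diff_self]
  have hset : Set.Ici (0:ℝ) \ {0} = Set.Ioi 0 := by
    ext x; simp [lt_iff_le_and_ne, eq_comm, and_comm]
  rw [hset]
  have hF0 : F r 0 = 0 := by rw [F, if_pos le_rfl]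
  unfold ContinuousWithinAt
  rw [hF0]
  -- sqrt tends to 0 within Ioi 0, staying in Ioi 0
  have hsqrt : Tendsto Real.sqrt (𝓝[>] (0:ℝ)) (𝓝[>] 0) := by
    apply tendsto_nhdsWithin_of_tendsto_nhds_of_eventually_within
    · have := (Real.continuous_sqrt.tendsto 0)
      rw [Real.sqrt_zero] at this
      exact this.mono_left nhdsWithin_le_nhds
    · filter_upwards [self_mem_nhdsWithin] with t (ht : (0:ℝ) < t)
      exact Real.sqrt_pos.2 ht
  -- term 1 tends to 0
  have hE : Tendsto (fun t : ℝ => Real.exp (-r ^ 2 / (2 * t))) (𝓝[>] (0:ℝ)) (𝓝 0) := by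
    apply Real.tendsto_exp_atBot.comp
    have h1 : Tendsto (fun t : ℝ => -r ^ 2 / 2 * t⁻¹) (𝓝[>] (0:ℝ)) atBot := by
      apply Tendsto.const_mul_atTop_of_neg (by nlinarith [pow_pos hr 2]) tendsto_inv_nhdsGT_zero
    apply h1.congr
    intro t; ring
  have hterm1 : Tendsto (fun t : ℝ =>
      2 / (r * Real.sqrt (2 * Real.pi)) * Real.sqrt t * (1 - Real.exp (-r ^ 2 / (2 * t))))
      (𝓝[>] (0:ℝ)) (𝓝 0) := by
    have h1 : Tendsto (fun t : ℝ => Real.sqrt t) (𝓝[>] (0:ℝ)) (𝓝 0) :=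
      (hsqrt.mono_right nhdsWithin_le_nhds)
    have h2 : Tendsto (fun t : ℝ => 1 - Real.exp (-r ^ 2 / (2 * t))) (𝓝[>] (0:ℝ)) (𝓝 1) := by
      have := (tendsto_const_nhds (x := (1:ℝ))).sub hE
      simpa using this
    have := ((h1.const_mul (2 / (r * Real.sqrt (2 * Real.pi)))).mul h2)
    simpa using this
  -- term 2 tends to 0
  have hterm2 : Tendsto (fun t : ℝ => 2 / Real.sqrt (2 * Real.pi) * H (r / Real.sqrt t))
      (𝓝[>] (0:ℝ)) (𝓝 0) := by
    have harg : Tendsto (fun t : ℝ => r / Real.sqrt t) (𝓝[>] (0:ℝ)) atTop := by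
      simp only [div_eq_mul_inv]
      exact Tendsto.const_mul_atTop hr (tendsto_inv_nhdsGT_zero.comp hsqrt)
    have := (H_tendsto_zero.comp harg).const_mul (2 / Real.sqrt (2 * Real.pi))
    simpa using this
  have := hterm1.add hterm2
  rw [add_zero] at this
  apply this.congr'
  filter_upwards [self_mem_nhdsWithin] with t (ht : (0:ℝ) < t)
  rw [F_pos ht]

end UMTD

/-- For `r > 0`, the function `p_r(t) = (1/(r√(2πt))) (1 − exp(−r²/(2t)))` is a probability
density on `(0, ∞)`: it is nonnegative there and integrates to `1`. -/
theorem ultimateMinimumTimeDensity_isProbabilityDensity (r : ℝ) (hr : 0 < r) :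
    (∀ t ∈ Set.Ioi (0 : ℝ),
      0 ≤ 1 / (r * Real.sqrt (2 * Real.pi * t)) * (1 - Real.exp (-r ^ 2 / (2 * t)))) ∧
    ∫ t in Set.Ioi (0 : ℝ),
      1 / (r * Real.sqrt (2 * Real.pi * t)) * (1 - Real.exp (-r ^ 2 / (2 * t))) = 1 := by
  have hpos : ∀ t ∈ Set.Ioi (0 : ℝ),
      0 ≤ 1 / (r * Real.sqrt (2 * Real.pi * t)) * (1 - Real.exp (-r ^ 2 / (2 * t))) := by
    intro t ht
    have ht0 : (0:ℝ) < t := ht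
    have h1 : (0:ℝ) ≤ 1 / (r * Real.sqrt (2 * Real.pi * t)) := by positivity
    have h2 : Real.exp (-r ^ 2 / (2 * t)) ≤ 1 := by
      rw [Real.exp_le_one_iff]
      apply div_nonpos_of_nonpos_of_nonneg
      · exact neg_nonpos.2 (by positivity)
      · linarith
    exact mul_nonneg h1 (by linarith)
  refine ⟨hpos, ?_⟩
  have key := integral_Ioi_of_hasDerivAt_of_nonneg
      (g := UMTD.F r)
      (g' := fun t => 1 / (r * Real.sqrt (2 * Real.pi * t)) * (1 - Real.exp (-r ^ 2 / (2 * t))))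
      (UMTD.F_contWithinAt hr)
      (fun t ht => UMTD.F_hasDerivAt hr ht) hpos (UMTD.F_tendsto_atTop hr)
  rw [key, show UMTD.F r 0 = 0 from by rw [UMTD.F, if_pos le_rfl]]
  ring
end

section
/- For every r > 0 and every λ > 0, the Laplace transform of the density p_r satisfies ∫₀^∞ e^{−λt} · (1 / (r·√(2πt))) · (1 − exp(−r²/(2t))) dt = (1 / (√(2λ) · r)) · (1 − exp(−√(2λ) · r)). (This establishes the equivalence of statements (c) and (d) of the paper.) -/
open MeasureTheory Real

open Set

-- derivative of φ s = α s - β / s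
lemma phi_deriv (α β : ℝ) {s : ℝ} (hs : 0 < s) :
    HasDerivAt (fun s : ℝ => α * s - β / s) (α + β / s ^ 2) s := by
  have h1 : HasDerivAt (fun s : ℝ => α * s) α s := by
    simpa using (hasDerivAt_id s).const_mul α
  have h2 : HasDerivAt (fun s : ℝ => β / s) (β * (-(s ^ 2)⁻¹)) s := by
    simpa [div_eq_mul_inv] using (hasDerivAt_inv hs.ne').const_mul β
  have := h1.sub h2
  refine this.congr_deriv ?_
  ring

lemma phi_injOn (α β : ℝ) (hα : 0 < α) (hβ : 0 < β) :
    InjOn (fun s : ℝ => α * s - β / s) (Ioi 0) := by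
  apply StrictMonoOn.injOn
  intro x hx y hy hxy
  simp only [mem_Ioi] at hx hy
  have h1 : α * x < α * y := by nlinarith
  have h2 : β / y < β / x := by
    apply div_lt_div_of_pos_left hβ hx hxy
  simp only
  linarith

lemma phi_image (α β : ℝ) (hα : 0 < α) (hβ : 0 < β) :
    (fun s : ℝ => α * s - β / s) '' (Ioi 0) = univ := by
  apply eq_univ_of_forall
  intro u
  set d := Real.sqrt (u ^ 2 + 4 * α * β) with hd
  have hd2 : d ^ 2 = u ^ 2 + 4 * α * β := Real.sq_sqrt (by nlinarith [sq_nonneg u])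
  have hdu : -u < d := by
    nlinarith [Real.sqrt_nonneg (u ^ 2 + 4 * α * β), sq_nonneg (d + u)]
  have hud : (0:ℝ) < u + d := by linarith
  refine ⟨(u + d) / (2 * α), ?_, ?_⟩
  · simp only [mem_Ioi]
    positivity
  · simp only
    field_simp [hud.ne']
    nlinarith [hd2]

lemma exp_neg_sq_integrable : Integrable (fun u : ℝ => Real.exp (-u ^ 2)) := by
  simpa using integrable_exp_neg_mul_sq one_pos

lemma exp_neg_sq_integral : ∫ u : ℝ, Real.exp (-u ^ 2) = Real.sqrt Real.pi := by
  simpa using integral_gaussian 1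

lemma sqrt_pi_eq (α β : ℝ) (hα : 0 < α) (hβ : 0 < β) :
    Real.sqrt Real.pi
      = ∫ s in Ioi (0:ℝ), (α + β / s ^ 2) * Real.exp (-(α * s - β / s) ^ 2) := by
  have h := integral_image_eq_integral_abs_deriv_smul (f := fun s => α * s - β / s)
    (f' := fun s => α + β / s ^ 2) measurableSet_Ioi
    (fun s hs => (phi_deriv α β hs).hasDerivWithinAt) (phi_injOn α β hα hβ)
    (fun u => Real.exp (-u ^ 2))
  rw [phi_image α β hα hβ, setIntegral_univ, exp_neg_sq_integral] at h
  rw [h]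
  apply setIntegral_congr_fun measurableSet_Ioi
  intro s hs
  simp only [mem_Ioi] at hs
  have : 0 < α + β / s ^ 2 := by positivity
  simp [smul_eq_mul, abs_of_pos this]

lemma glasser_integrable (α β : ℝ) (hα : 0 < α) (hβ : 0 < β) :
    IntegrableOn (fun s => (α + β / s ^ 2) * Real.exp (-(α * s - β / s) ^ 2)) (Ioi (0:ℝ)) := by
  have h := (integrableOn_image_iff_integrableOn_abs_deriv_smul (f := fun s => α * s - β / s)
    (f' := fun s => α + β / s ^ 2) measurableSet_Ioi
    (fun s hs => (phi_deriv α β hs).hasDerivWithinAt) (phi_injOn α β hα hβ)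
    (fun u => Real.exp (-u ^ 2))).mp ?_
  · apply h.congr_fun ?_ measurableSet_Ioi
    intro s hs
    simp only [mem_Ioi] at hs
    have : 0 < α + β / s ^ 2 := by positivity
    simp [smul_eq_mul, abs_of_pos this]
  · rw [phi_image α β hα hβ]
    exact (integrableOn_univ).mpr exp_neg_sq_integrable

lemma phi_meas (α β : ℝ) : Measurable (fun s : ℝ => Real.exp (-(α * s - β / s) ^ 2)) := by
  fun_prop

lemma f1_integrable (α β : ℝ) (hα : 0 < α) (hβ : 0 < β) :
    IntegrableOn (fun s => α * Real.exp (-(α * s - β / s) ^ 2)) (Ioi (0:ℝ)) := by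
  apply Integrable.mono (glasser_integrable α β hα hβ)
  · exact ((phi_meas α β).const_mul α).aestronglyMeasurable.restrict
  · rw [ae_restrict_iff' measurableSet_Ioi]
    filter_upwards with s hs
    simp only [mem_Ioi] at hs
    have h1 : 0 < α + β / s ^ 2 := by positivity
    have he : 0 < Real.exp (-(α * s - β / s) ^ 2) := Real.exp_pos _
    rw [Real.norm_eq_abs, Real.norm_eq_abs, abs_of_pos (by positivity),
      abs_of_pos (by positivity)]
    have : β / s ^ 2 > 0 := by positivity
    nlinarith

lemma f2_integrable (α β : ℝ) (hα : 0 < α) (hβ : 0 < β) :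
    IntegrableOn (fun s => β / s ^ 2 * Real.exp (-(α * s - β / s) ^ 2)) (Ioi (0:ℝ)) := by
  apply Integrable.mono (glasser_integrable α β hα hβ)
  · apply Measurable.aestronglyMeasurable ?_ |>.restrict
    fun_prop
  · rw [ae_restrict_iff' measurableSet_Ioi]
    filter_upwards with s hs
    simp only [mem_Ioi] at hs
    have h1 : 0 < β / s ^ 2 := by positivity
    have he : 0 < Real.exp (-(α * s - β / s) ^ 2) := Real.exp_pos _
    rw [Real.norm_eq_abs, Real.norm_eq_abs, abs_of_pos (by positivity),
      abs_of_pos (by positivity)]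
    nlinarith

lemma psi_image (α β : ℝ) (hα : 0 < α) (hβ : 0 < β) :
    (fun s : ℝ => β / α * s⁻¹) '' (Ioi 0) = Ioi 0 := by
  ext y
  constructor
  · rintro ⟨s, hs, rfl⟩
    simp only [mem_Ioi] at hs ⊢
    positivity
  · intro hy
    simp only [mem_Ioi] at hy
    refine ⟨β / (α * y), mem_Ioi.mpr (by positivity), ?_⟩
    field_simp

lemma sym_integral (α β : ℝ) (hα : 0 < α) (hβ : 0 < β) :
    ∫ s in Ioi (0:ℝ), α * Real.exp (-(α * s - β / s) ^ 2)
      = ∫ s in Ioi (0:ℝ), β / s ^ 2 * Real.exp (-(α * s - β / s) ^ 2) := by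
  have hba : (0:ℝ) < β / α := by positivity
  have hderiv : ∀ s ∈ Ioi (0:ℝ),
      HasDerivWithinAt (fun s : ℝ => β / α * s⁻¹) (β / α * (-(s ^ 2)⁻¹)) (Ioi 0) s := by
    intro s hs
    simp only [mem_Ioi] at hs
    exact ((hasDerivAt_inv hs.ne').const_mul (β / α)).hasDerivWithinAt
  have hinj : InjOn (fun s : ℝ => β / α * s⁻¹) (Ioi 0) := by
    intro x hx y hy h
    simp only at h
    have := mul_left_cancel₀ hba.ne' h
    exact inv_injective this
  have h := integral_image_eq_integral_abs_deriv_smul measurableSet_Ioi hderiv hinj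
    (fun s => Real.exp (-(α * s - β / s) ^ 2))
  rw [psi_image α β hα hβ] at h
  rw [integral_const_mul, h, ← integral_const_mul]
  apply setIntegral_congr_fun measurableSet_Ioi
  intro s hs
  simp only [mem_Ioi] at hs
  have hs2 : (0:ℝ) < s ^ 2 := by positivity
  have habs : |β / α * (-(s ^ 2)⁻¹)| = β / α * (s ^ 2)⁻¹ := by
    rw [abs_mul, abs_of_pos hba, abs_neg, abs_of_pos (by positivity)]
  simp only [smul_eq_mul, habs]
  have harg : α * (β / α * s⁻¹) - β / (β / α * s⁻¹) = -(α * s - β / s) := by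
    field_simp
    ring
  rw [harg, neg_sq]
  field_simp

lemma f1_integral (α β : ℝ) (hα : 0 < α) (hβ : 0 < β) :
    ∫ s in Ioi (0:ℝ), α * Real.exp (-(α * s - β / s) ^ 2) = Real.sqrt Real.pi / 2 := by
  have hsplit : ∫ s in Ioi (0:ℝ), (α + β / s ^ 2) * Real.exp (-(α * s - β / s) ^ 2)
      = (∫ s in Ioi (0:ℝ), α * Real.exp (-(α * s - β / s) ^ 2))
        + ∫ s in Ioi (0:ℝ), β / s ^ 2 * Real.exp (-(α * s - β / s) ^ 2) := by
    rw [← integral_add (f1_integrable α β hα hβ) (f2_integrable α β hα hβ)]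
    apply setIntegral_congr_fun measurableSet_Ioi
    intro s hs
    ring
  have h := sqrt_pi_eq α β hα hβ
  rw [hsplit, ← sym_integral α β hα hβ] at h
  linarith

lemma glasser_value (b c : ℝ) (hb : 0 < b) (hc : 0 < c) :
    ∫ s in Ioi (0:ℝ), Real.exp (-(b * s ^ 2 + c / s ^ 2))
      = Real.sqrt Real.pi / (2 * Real.sqrt b)
        * Real.exp (-(2 * Real.sqrt b * Real.sqrt c)) := by
  set α := Real.sqrt b with hαd
  set β := Real.sqrt c with hβd
  have hα : 0 < α := Real.sqrt_pos.mpr hb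
  have hβ : 0 < β := Real.sqrt_pos.mpr hc
  have hα2 : α ^ 2 = b := Real.sq_sqrt hb.le
  have hβ2 : β ^ 2 = c := Real.sq_sqrt hc.le
  have key : EqOn (fun s : ℝ => Real.exp (-(b * s ^ 2 + c / s ^ 2)))
      (fun s : ℝ => Real.exp (-(2 * α * β)) * Real.exp (-(α * s - β / s) ^ 2)) (Ioi 0) := by
    intro s hs
    simp only [mem_Ioi] at hs
    simp only
    rw [← Real.exp_add]
    congr 1
    rw [← hα2, ← hβ2]
    field_simp
    ring
  rw [setIntegral_congr_fun measurableSet_Ioi key, integral_const_mul]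
  have h := f1_integral α β hα hβ
  rw [integral_const_mul] at h
  have : ∫ s in Ioi (0:ℝ), Real.exp (-(α * s - β / s) ^ 2) = Real.sqrt Real.pi / (2 * α) := by
    rw [eq_div_iff (by positivity)]
    nlinarith [h]
  rw [this]
  ring

lemma glasser_integrable' (b c : ℝ) (hb : 0 < b) (hc : 0 < c) :
    IntegrableOn (fun s => Real.exp (-(b * s ^ 2 + c / s ^ 2))) (Ioi (0:ℝ)) := by
  set α := Real.sqrt b
  set β := Real.sqrt c
  have hα : 0 < α := Real.sqrt_pos.mpr hb
  have hβ : 0 < β := Real.sqrt_pos.mpr hc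
  have hα2 : α ^ 2 = b := Real.sq_sqrt hb.le
  have hβ2 : β ^ 2 = c := Real.sq_sqrt hc.le
  have hI : IntegrableOn (fun s => Real.exp (-(2 * α * β)) / α * (α * Real.exp (-(α * s - β / s) ^ 2))) (Ioi (0:ℝ)) :=
    (f1_integrable α β hα hβ).const_mul (Real.exp (-(2 * α * β)) / α)
  apply hI.congr_fun ?_ measurableSet_Ioi
  intro s hs
  simp only [mem_Ioi] at hs
  simp only
  rw [← mul_assoc, div_mul_cancel₀ _ hα.ne', ← Real.exp_add]
  congr 1
  rw [← hα2, ← hβ2]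
  field_simp
  ring

/-- Laplace transform of the density `p_r`:
`∫₀^∞ e^{−λt} (1/(r√(2πt))) (1 − exp(−r²/(2t))) dt = (1/(√(2λ)r)) (1 − exp(−√(2λ)r))`
for `r > 0`, `λ > 0` (equivalence of statements (c) and (d) of the paper). -/
theorem ultimateMinimumTimeDensity_laplaceTransform (r : ℝ) (hr : 0 < r) (l : ℝ) (hl : 0 < l) :
    ∫ t in Set.Ioi (0 : ℝ),
      Real.exp (-l * t) *
        (1 / (r * Real.sqrt (2 * Real.pi * t)) * (1 - Real.exp (-r ^ 2 / (2 * t))))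
      = 1 / (Real.sqrt (2 * l) * r) * (1 - Real.exp (-(Real.sqrt (2 * l) * r))) := by
  have h2π : (0:ℝ) < 2 * Real.pi := by positivity
  have hsub := integral_comp_rpow_Ioi_of_pos (g := fun t => Real.exp (-l * t) *
      (1 / (r * Real.sqrt (2 * Real.pi * t)) * (1 - Real.exp (-r ^ 2 / (2 * t)))))
      (p := 2) two_pos
  rw [← hsub]
  set C : ℝ := 2 / (r * Real.sqrt (2 * Real.pi)) with hC
  have heq : EqOn (fun s : ℝ => (2 * s ^ ((2:ℝ) - 1)) • ((fun t => Real.exp (-l * t) *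
      (1 / (r * Real.sqrt (2 * Real.pi * t)) * (1 - Real.exp (-r ^ 2 / (2 * t))))) (s ^ (2:ℝ))))
      (fun s : ℝ => C * Real.exp (-l * s ^ 2)
        - C * Real.exp (-(l * s ^ 2 + r ^ 2 / 2 / s ^ 2))) (Ioi 0) := by
    intro s hs
    simp only [mem_Ioi] at hs
    simp only [smul_eq_mul]
    have hp2 : s ^ ((2:ℝ)) = s ^ 2 := by
      rw [show (2:ℝ) = ((2:ℕ):ℝ) by norm_num, Real.rpow_natCast]
    rw [show ((2:ℝ) - 1) = 1 by norm_num, Real.rpow_one, hp2]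
    have hsqrt : Real.sqrt (2 * Real.pi * s ^ 2) = Real.sqrt (2 * Real.pi) * s := by
      rw [Real.sqrt_mul h2π.le, Real.sqrt_sq hs.le]
    rw [hsqrt]
    have hE : Real.exp (-(l * s ^ 2 + r ^ 2 / 2 / s ^ 2))
        = Real.exp (-l * s ^ 2) * Real.exp (-r ^ 2 / (2 * s ^ 2)) := by
      rw [← Real.exp_add]
      congr 1
      field_simp
      ring
    rw [hE, hC]
    have hsπ : (0:ℝ) < Real.sqrt (2 * Real.pi) := Real.sqrt_pos.mpr h2π
    field_simp
  rw [setIntegral_congr_fun measurableSet_Ioi heq]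
  have hG1 : IntegrableOn (fun s : ℝ => C * Real.exp (-l * s ^ 2)) (Ioi 0) :=
    ((integrable_exp_neg_mul_sq hl).const_mul C).integrableOn
  have hG2 : IntegrableOn (fun s : ℝ => C * Real.exp (-(l * s ^ 2 + r ^ 2 / 2 / s ^ 2)))
      (Ioi 0) := (glasser_integrable' l (r ^ 2 / 2) hl (by positivity)).const_mul C
  rw [integral_sub hG1 hG2, integral_const_mul, integral_const_mul, integral_gaussian_Ioi,
    glasser_value l (r ^ 2 / 2) hl (by positivity)]
  -- now pure arithmetic
  have hs2 : Real.sqrt 2 * Real.sqrt 2 = 2 := Real.mul_self_sqrt (by norm_num)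
  have h2pos : (0:ℝ) < Real.sqrt 2 := by positivity
  have hlpos : (0:ℝ) < Real.sqrt l := Real.sqrt_pos.mpr hl
  have hπpos : (0:ℝ) < Real.sqrt Real.pi := Real.sqrt_pos.mpr Real.pi_pos
  have h1 : Real.sqrt (Real.pi / l) = Real.sqrt Real.pi / Real.sqrt l := by
    rw [Real.sqrt_div Real.pi_pos.le]
  have h2 : Real.sqrt (r ^ 2 / 2) = r / Real.sqrt 2 := by
    rw [Real.sqrt_div (sq_nonneg r), Real.sqrt_sq hr.le]
  have h3 : Real.sqrt (2 * l) = Real.sqrt 2 * Real.sqrt l := Real.sqrt_mul (by norm_num) l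
  have h4 : Real.sqrt (2 * Real.pi) = Real.sqrt 2 * Real.sqrt Real.pi :=
    Real.sqrt_mul (by norm_num) Real.pi
  have h5 : 2 * Real.sqrt l * (r / Real.sqrt 2) = Real.sqrt 2 * Real.sqrt l * r := by
    field_simp
    linear_combination -hs2
  rw [h1, h2, h3, h5, hC, h4]
  field_simp
end
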